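/- Energy dissipation of the scheme with zero forcing: In the discrete ensemble scheme setting, fix j ∈ {1,…,J}, assume Δt > 0, μ > 1/2, α_j > 0, and f_{1,j}^{n+1} = f_{2,j}^{n+1} = 0 for all n. Then the discrete energy E_j^n := ‖v_j^n‖² + ‖w_j^n‖² + ((ν̄+ν̄_m)·Δt/2)·(‖∇v_j^n‖² + ‖∇w_j^n‖²) is nonincreasing in n: E_j^{n+1} ≤ E_j^n for every n = 0,…,M−1. -/

import Mathlib

open MeasureTheory Finset RealInnerProductSpace

noncomputable section

abbrev Euc (d : ℕ) := EuclideanSpace ℝ (Fin d)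

def eb {d : ℕ} (i : Fin d) : Euc d := EuclideanSpace.single i 1

def frobInner {d : ℕ} (A B : Euc d →L[ℝ] Euc d) : ℝ :=
  ∑ i : Fin d, ⟪A (eb i), B (eb i)⟫

def l2inner {d : ℕ} (φ ψ : Euc d → Euc d) : ℝ := ∫ x, ⟪φ x, ψ x⟫

def l2norm {d : ℕ} (φ : Euc d → Euc d) : ℝ := Real.sqrt (l2inner φ φ)

def gradInner {d : ℕ} (φ ψ : Euc d → Euc d) : ℝ :=
  ∫ x, frobInner (fderiv ℝ φ x) (fderiv ℝ ψ x)

def gradNorm {d : ℕ} (φ : Euc d → Euc d) : ℝ := Real.sqrt (gradInner φ φ)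

def divg {d : ℕ} (φ : Euc d → Euc d) (x : Euc d) : ℝ :=
  ∑ i : Fin d, ⟪fderiv ℝ φ x (eb i), eb i⟫

def triForm {d : ℕ} (u v w : Euc d → Euc d) : ℝ :=
  ∫ x, ⟪fderiv ℝ v x (u x), w x⟫

def IsFEMSpace (d : ℕ) (Ω : Set (Euc d)) (Vh : Submodule ℝ (Euc d → Euc d)) : Prop :=
  FiniteDimensional ℝ Vh ∧
  ∀ χ ∈ Vh, ContDiff ℝ (⊤ : ℕ∞) χ ∧ HasCompactSupport χ ∧ tsupport χ ⊆ Ω ∧ ∀ x, divg χ x = 0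

def mean (J : ℕ) (ν : Fin J → ℝ) : ℝ := (∑ j, ν j) / J

def alphaCoef (J : ℕ) (ν νm : Fin J → ℝ) (j : Fin J) : ℝ :=
  mean J ν + mean J νm - |ν j - νm j| - |(ν j - mean J ν) + (νm j - mean J νm)|

def ensAvg {d : ℕ} (J : ℕ) (z : Fin J → ℕ → Euc d → Euc d) (n : ℕ) : Euc d → Euc d :=
  fun x => (J : ℝ)⁻¹ • ∑ j, z j n x

def fluct {d : ℕ} (J : ℕ) (z : Fin J → ℕ → Euc d → Euc d) (j : Fin J) (n : ℕ) :
    Euc d → Euc d :=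
  fun x => z j n x - ensAvg J z n x

def lmax {d : ℕ} (J : ℕ) (z : Fin J → ℕ → Euc d → Euc d) (n : ℕ) (x : Euc d) : ℝ :=
  ⨆ j : Fin J, ‖fluct J z j n x‖

def BddMeasurable {d : ℕ} (f : Euc d → Euc d) : Prop :=
  Measurable f ∧ ∃ C, ∀ x, ‖f x‖ ≤ C

def SchemeSol (d J : ℕ) (Vh : Submodule ℝ (Euc d → Euc d)) (Δt μ : ℝ)
    (ν νm : Fin J → ℝ) (M : ℕ) (v w f1 f2 : Fin J → ℕ → Euc d → Euc d) : Prop :=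
  (∀ j n, n ≤ M → v j n ∈ Vh ∧ w j n ∈ Vh) ∧
  (∀ j n, BddMeasurable (f1 j n) ∧ BddMeasurable (f2 j n)) ∧
  (∀ n, n < M → ∀ j : Fin J, ∀ χ ∈ Vh,
    (l2inner (fun x => Δt⁻¹ • (v j (n+1) x - v j n x)) χ
        + triForm (ensAvg J w n) (v j (n+1)) χ
        + ((mean J ν + mean J νm)/2) * gradInner (v j (n+1)) χ
        + 2*μ*Δt * ∫ x, (lmax J w n x)^2 * frobInner (fderiv ℝ (v j (n+1)) x) (fderiv ℝ χ x)
      = l2inner (f1 j (n+1)) χ - triForm (fluct J w j n) (v j n) χ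
        - ((ν j - νm j)/2) * gradInner (w j n) χ
        - (((ν j - mean J ν) + (νm j - mean J νm))/2) * gradInner (v j n) χ) ∧
    (l2inner (fun x => Δt⁻¹ • (w j (n+1) x - w j n x)) χ
        + triForm (ensAvg J v n) (w j (n+1)) χ
        + ((mean J ν + mean J νm)/2) * gradInner (w j (n+1)) χ
        + 2*μ*Δt * ∫ x, (lmax J v n x)^2 * frobInner (fderiv ℝ (w j (n+1)) x) (fderiv ℝ χ x)
      = l2inner (f2 j (n+1)) χ - triForm (fluct J v j n) (w j n) χ
        - ((ν j - νm j)/2) * gradInner (v j n) χ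
        - (((ν j - mean J ν) + (νm j - mean J νm))/2) * gradInner (w j n) χ))


namespace EDAux

open MeasureTheory

variable {d : ℕ}

/-- Regularity: smooth with compact support. -/
structure Reg (φ : Euc d → Euc d) : Prop where
  smooth : ContDiff ℝ (⊤ : ℕ∞) φ
  cmpt : HasCompactSupport φ

namespace Reg

variable {φ ψ : Euc d → Euc d}

lemma cont (h : Reg φ) : Continuous φ := h.smooth.continuous

lemma diff (h : Reg φ) : Differentiable ℝ φ := h.smooth.differentiable (by simp)

lemma dcont (h : Reg φ) : Continuous (fderiv ℝ φ) := h.smooth.continuous_fderiv (by simp)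

lemma dcmpt (h : Reg φ) : HasCompactSupport (fderiv ℝ φ) := h.cmpt.fderiv (𝕜 := ℝ)

end Reg

/-- integrability of a continuous function dominated in support by a compactly
supported function. -/
lemma integrable_dom {α : Type*} [NormedAddCommGroup α] {F : Euc d → α}
    (hF : HasCompactSupport F) {g : Euc d → ℝ} (hg : Continuous g)
    (h0 : ∀ x, F x = 0 → g x = 0) : Integrable g :=
  hg.integrable_of_hasCompactSupport <|
    hF.mono fun x hx hFx => hx (h0 x hFx)

lemma int_inner {φ ψ : Euc d → Euc d} (hφ : Reg φ) (hψ : Continuous ψ) :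
    Integrable fun x => (⟪φ x, ψ x⟫ : ℝ) :=
  integrable_dom hφ.cmpt (hφ.cont.inner hψ) (fun x h => by simp [h])

lemma cont_frob {φ ψ : Euc d → Euc d} (hφ : Reg φ) (hψ : Reg ψ) :
    Continuous fun x => frobInner (fderiv ℝ φ x) (fderiv ℝ ψ x) := by
  unfold frobInner
  exact continuous_finset_sum _ fun i _ =>
    ((hφ.dcont.clm_apply continuous_const).inner (hψ.dcont.clm_apply continuous_const))

lemma int_frob {φ ψ : Euc d → Euc d} (hφ : Reg φ) (hψ : Reg ψ) :
    Integrable fun x => frobInner (fderiv ℝ φ x) (fderiv ℝ ψ x) :=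
  integrable_dom hφ.dcmpt (cont_frob hφ hψ) (fun x h => by simp [frobInner, h])

lemma int_tri {u φ ψ : Euc d → Euc d} (hu : Continuous u) (hφ : Reg φ) (hψ : Continuous ψ) :
    Integrable fun x => (⟪fderiv ℝ φ x (u x), ψ x⟫ : ℝ) :=
  integrable_dom hφ.dcmpt ((hφ.dcont.clm_apply hu).inner hψ) (fun x h => by simp [h])

/- l2inner basics -/

lemma l2inner_comm (φ ψ : Euc d → Euc d) : l2inner φ ψ = l2inner ψ φ := by
  unfold l2inner; simp_rw [real_inner_comm]

lemma l2inner_self_nonneg (φ : Euc d → Euc d) : 0 ≤ l2inner φ φ :=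
  integral_nonneg fun x => real_inner_self_nonneg

lemma l2norm_sq (φ : Euc d → Euc d) : l2norm φ ^ 2 = l2inner φ φ :=
  Real.sq_sqrt (l2inner_self_nonneg φ)

lemma frobInner_self_nonneg (A : Euc d →L[ℝ] Euc d) : 0 ≤ frobInner A A :=
  Finset.sum_nonneg fun i _ => real_inner_self_nonneg

lemma gradInner_self_nonneg (φ : Euc d → Euc d) : 0 ≤ gradInner φ φ :=
  integral_nonneg fun x => frobInner_self_nonneg _

lemma gradNorm_sq (φ : Euc d → Euc d) : gradNorm φ ^ 2 = gradInner φ φ :=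
  Real.sq_sqrt (gradInner_self_nonneg φ)

/- expansions -/

lemma l2_expand_sub {φ ψ : Euc d → Euc d} (hφ : Reg φ) (hψ : Reg ψ) :
    l2inner (fun x => φ x - ψ x) (fun x => φ x - ψ x)
      = l2inner φ φ - 2 * l2inner φ ψ + l2inner ψ ψ := by
  unfold l2inner
  have h : ∀ x : Euc d, (⟪φ x - ψ x, φ x - ψ x⟫ : ℝ)
      = ⟪φ x, φ x⟫ - 2 * ⟪φ x, ψ x⟫ + ⟪ψ x, ψ x⟫ := fun x => real_inner_sub_sub_self _ _
  simp_rw [h]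
  rw [integral_add (f := fun x => (⟪φ x, φ x⟫ : ℝ) - 2 * ⟪φ x, ψ x⟫)
      (g := fun x => (⟪ψ x, ψ x⟫ : ℝ))
      (((int_inner hφ hφ.cont).sub ((int_inner hφ hψ.cont).const_mul 2)))
      (int_inner hψ hψ.cont),
    integral_sub (f := fun x => (⟪φ x, φ x⟫ : ℝ)) (g := fun x => 2 * (⟪φ x, ψ x⟫ : ℝ))
      (int_inner hφ hφ.cont) ((int_inner hφ hψ.cont).const_mul 2),
    integral_const_mul]

lemma frob_sub_sub (A B : Euc d →L[ℝ] Euc d) :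
    frobInner (A - B) (A - B) = frobInner A A - 2 * frobInner A B + frobInner B B := by
  unfold frobInner
  simp_rw [ContinuousLinearMap.sub_apply, real_inner_sub_sub_self]
  rw [Finset.sum_add_distrib, Finset.sum_sub_distrib, ← Finset.mul_sum]

lemma frob_add_add (A B : Euc d →L[ℝ] Euc d) :
    frobInner (A + B) (A + B) = frobInner A A + 2 * frobInner A B + frobInner B B := by
  unfold frobInner
  simp_rw [ContinuousLinearMap.add_apply, real_inner_add_add_self]
  rw [Finset.sum_add_distrib, Finset.sum_add_distrib, ← Finset.mul_sum]

lemma fderiv_ptsub {φ ψ : Euc d → Euc d} (hφ : Reg φ) (hψ : Reg ψ) (x : Euc d) :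
    fderiv ℝ (fun y => φ y - ψ y) x = fderiv ℝ φ x - fderiv ℝ ψ x :=
  fderiv_sub (hφ.diff x) (hψ.diff x)

lemma fderiv_ptadd {φ ψ : Euc d → Euc d} (hφ : Reg φ) (hψ : Reg ψ) (x : Euc d) :
    fderiv ℝ (fun y => φ y + ψ y) x = fderiv ℝ φ x + fderiv ℝ ψ x :=
  fderiv_add (hφ.diff x) (hψ.diff x)

lemma grad_expand_sub {φ ψ : Euc d → Euc d} (hφ : Reg φ) (hψ : Reg ψ) :
    gradInner (fun x => φ x - ψ x) (fun x => φ x - ψ x)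
      = gradInner φ φ - 2 * gradInner φ ψ + gradInner ψ ψ := by
  unfold gradInner
  have h : ∀ x : Euc d,
      frobInner (fderiv ℝ (fun y => φ y - ψ y) x) (fderiv ℝ (fun y => φ y - ψ y) x)
        = frobInner (fderiv ℝ φ x) (fderiv ℝ φ x)
          - 2 * frobInner (fderiv ℝ φ x) (fderiv ℝ ψ x)
          + frobInner (fderiv ℝ ψ x) (fderiv ℝ ψ x) := fun x => by
    rw [fderiv_ptsub hφ hψ, frob_sub_sub]
  simp_rw [h]
  rw [integral_add (f := fun x => frobInner (fderiv ℝ φ x) (fderiv ℝ φ x)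
        - 2 * frobInner (fderiv ℝ φ x) (fderiv ℝ ψ x))
      (g := fun x => frobInner (fderiv ℝ ψ x) (fderiv ℝ ψ x))
      (((int_frob hφ hφ).sub ((int_frob hφ hψ).const_mul 2))) (int_frob hψ hψ),
    integral_sub (f := fun x => frobInner (fderiv ℝ φ x) (fderiv ℝ φ x))
      (g := fun x => 2 * frobInner (fderiv ℝ φ x) (fderiv ℝ ψ x))
      (int_frob hφ hφ) ((int_frob hφ hψ).const_mul 2), integral_const_mul]

lemma grad_expand_add {φ ψ : Euc d → Euc d} (hφ : Reg φ) (hψ : Reg ψ) :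
    gradInner (fun x => φ x + ψ x) (fun x => φ x + ψ x)
      = gradInner φ φ + 2 * gradInner φ ψ + gradInner ψ ψ := by
  unfold gradInner
  have h : ∀ x : Euc d,
      frobInner (fderiv ℝ (fun y => φ y + ψ y) x) (fderiv ℝ (fun y => φ y + ψ y) x)
        = frobInner (fderiv ℝ φ x) (fderiv ℝ φ x)
          + 2 * frobInner (fderiv ℝ φ x) (fderiv ℝ ψ x)
          + frobInner (fderiv ℝ ψ x) (fderiv ℝ ψ x) := fun x => by
    rw [fderiv_ptadd hφ hψ, frob_add_add]
  simp_rw [h]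
  rw [integral_add (f := fun x => frobInner (fderiv ℝ φ x) (fderiv ℝ φ x)
        + 2 * frobInner (fderiv ℝ φ x) (fderiv ℝ ψ x))
      (g := fun x => frobInner (fderiv ℝ ψ x) (fderiv ℝ ψ x))
      (((int_frob hφ hφ).add ((int_frob hφ hψ).const_mul 2))) (int_frob hψ hψ),
    integral_add (f := fun x => frobInner (fderiv ℝ φ x) (fderiv ℝ φ x))
      (g := fun x => 2 * frobInner (fderiv ℝ φ x) (fderiv ℝ ψ x))
      (int_frob hφ hφ) ((int_frob hφ hψ).const_mul 2), integral_const_mul]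

lemma grad_nonneg_sub {φ ψ : Euc d → Euc d} (hφ : Reg φ) (hψ : Reg ψ) :
    0 ≤ gradInner φ φ - 2 * gradInner φ ψ + gradInner ψ ψ := by
  rw [← grad_expand_sub hφ hψ]; exact gradInner_self_nonneg _

lemma gradInner_abs_le {φ ψ : Euc d → Euc d} (hφ : Reg φ) (hψ : Reg ψ) :
    |gradInner φ ψ| ≤ (gradInner φ φ + gradInner ψ ψ) / 2 := by
  have h1 := grad_nonneg_sub hφ hψ
  have h2 : 0 ≤ gradInner φ φ + 2 * gradInner φ ψ + gradInner ψ ψ := by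
    rw [← grad_expand_add hφ hψ]; exact gradInner_self_nonneg _
  rw [abs_le]; constructor <;> linarith

/- Young's inequality -/

lemma young_ineq (a b θ : ℝ) (hθ : 0 < θ) : a * b ≤ θ * a ^ 2 + b ^ 2 / (4 * θ) := by
  have h4 : (0:ℝ) < 4 * θ := by linarith
  rw [div_eq_mul_inv]
  nlinarith [sq_nonneg (2 * θ * a - b), mul_inv_cancel₀ (ne_of_gt h4), sq_nonneg b,
    inv_pos.mpr h4]

lemma eb_basis (i : Fin d) : ((EuclideanSpace.basisFun (Fin d) ℝ) i : Euc d) = eb i := by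
  simp [eb, EuclideanSpace.basisFun_apply]

/-- Frobenius norm dominates operator norm. -/
lemma frob_opnorm (A : Euc d →L[ℝ] Euc d) (u : Euc d) :
    ‖A u‖ ≤ Real.sqrt (frobInner A A) * ‖u‖ := by
  classical
  set b := EuclideanSpace.basisFun (Fin d) ℝ with hb
  have hu : u = ∑ i, ⟪(b i : Euc d), u⟫ • (b i : Euc d) := (b.sum_repr' u).symm
  have hAu : A u = ∑ i, ⟪(b i : Euc d), u⟫ • A (b i) := by
    conv_lhs => rw [hu]
    rw [map_sum]
    exact Finset.sum_congr rfl fun i _ => by rw [_root_.map_smul]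
  have h1 : ‖A u‖ ≤ ∑ i, |(⟪(b i : Euc d), u⟫ : ℝ)| * ‖A (b i)‖ := by
    rw [hAu]
    refine (norm_sum_le _ _).trans_eq ?_
    exact Finset.sum_congr rfl fun i _ => by rw [norm_smul, Real.norm_eq_abs]
  have h2 : ∑ i, |(⟪(b i : Euc d), u⟫ : ℝ)| * ‖A (b i)‖
      ≤ Real.sqrt (∑ i, |(⟪(b i : Euc d), u⟫ : ℝ)| ^ 2) * Real.sqrt (∑ i, ‖A (b i)‖ ^ 2) :=
    Real.sum_mul_le_sqrt_mul_sqrt _ _ _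
  have h3 : ∑ i, |(⟪(b i : Euc d), u⟫ : ℝ)| ^ 2 = ‖u‖ ^ 2 := by
    have := b.sum_inner_mul_inner u u
    calc ∑ i, |(⟪(b i : Euc d), u⟫ : ℝ)| ^ 2
        = ∑ i, (⟪u, (b i : Euc d)⟫ : ℝ) * ⟪(b i : Euc d), u⟫ := by
          refine Finset.sum_congr rfl fun i _ => ?_
          rw [sq_abs, sq, real_inner_comm]
      _ = ⟪u, u⟫ := this
      _ = ‖u‖ ^ 2 := real_inner_self_eq_norm_sq u
  have h4 : ∑ i, ‖A (b i)‖ ^ 2 = frobInner A A := by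
    unfold frobInner
    refine Finset.sum_congr rfl fun i _ => ?_
    rw [eb_basis, real_inner_self_eq_norm_sq]
  calc ‖A u‖ ≤ _ := h1
    _ ≤ _ := h2
    _ = Real.sqrt (frobInner A A) * ‖u‖ := by
        rw [h3, h4, Real.sqrt_sq (norm_nonneg u), mul_comm]

/- triForm lemmas -/

lemma tri_middle_sub {u φ ψ χ : Euc d → Euc d} (hu : Continuous u) (hφ : Reg φ)
    (hψ : Reg ψ) (hχ : Continuous χ) :
    triForm u (fun x => φ x - ψ x) χ = triForm u φ χ - triForm u ψ χ := by
  unfold triForm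
  have h : ∀ x : Euc d, (⟪fderiv ℝ (fun y => φ y - ψ y) x (u x), χ x⟫ : ℝ)
      = ⟪fderiv ℝ φ x (u x), χ x⟫ - ⟪fderiv ℝ ψ x (u x), χ x⟫ := fun x => by
    rw [fderiv_ptsub hφ hψ, ContinuousLinearMap.sub_apply, inner_sub_left]
  simp_rw [h]
  exact integral_sub (int_tri hu hφ hχ) (int_tri hu hψ hχ)

/-- Skew symmetry of the trilinear form for divergence-free compactly supported fields. -/
lemma tri_skew {u φ ψ : Euc d → Euc d} (hu : Reg u) (hφ : Reg φ) (hψ : Reg ψ)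
    (hdiv : ∀ x, divg u x = 0) : triForm u φ ψ = - triForm u ψ φ := by
  classical
  set g : Euc d → ℝ := fun x => ⟪φ x, ψ x⟫ with hgdef
  set f : Fin d → Euc d → ℝ := fun i x => ⟪u x, eb i⟫ with hfdef
  have hgsm : ContDiff ℝ (⊤ : ℕ∞) g := hφ.smooth.inner ℝ hψ.smooth
  have hgd : Differentiable ℝ g := hgsm.differentiable (by simp)
  have hgdc : Continuous (fderiv ℝ g) := hgsm.continuous_fderiv (by simp)
  have hfsm : ∀ i, ContDiff ℝ (⊤ : ℕ∞) (f i) := fun i => hu.smooth.inner ℝ contDiff_const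
  have hfd : ∀ i, Differentiable ℝ (f i) := fun i => (hfsm i).differentiable (by simp)
  have hfdc : ∀ i, Continuous (fderiv ℝ (f i)) := fun i => (hfsm i).continuous_fderiv (by simp)
  have hfderiv : ∀ (i : Fin d) x v, fderiv ℝ (f i) x v = ⟪fderiv ℝ u x v, eb i⟫ := by
    intro i x v
    have h := fderiv_inner_apply (𝕜 := ℝ) (hu.diff x) (differentiableAt_const (eb i)) v
    simpa [hfdef] using h
  have hgder : ∀ x v, fderiv ℝ g x v
      = (⟪φ x, fderiv ℝ ψ x v⟫ : ℝ) + ⟪fderiv ℝ φ x v, ψ x⟫ := fun x v =>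
    fderiv_inner_apply (𝕜 := ℝ) (hφ.diff x) (hψ.diff x) v
  have hdecomp : ∀ x, fderiv ℝ g x (u x) = ∑ i, f i x * fderiv ℝ g x (eb i) := by
    intro x
    have hbsum := (EuclideanSpace.basisFun (Fin d) ℝ).sum_repr' (u x)
    conv_lhs => rw [← hbsum]
    rw [map_sum]
    refine Finset.sum_congr rfl fun i _ => ?_
    rw [_root_.map_smul, smul_eq_mul, hfdef]
    simp only [eb_basis]
    rw [real_inner_comm]
  -- integrability
  have hIfg : ∀ i : Fin d, Integrable fun x => f i x * fderiv ℝ g x (eb i) := fun i =>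
    integrable_dom hu.cmpt ((hu.cont.inner continuous_const).mul
      (hgdc.clm_apply continuous_const)) (fun x h => by simp [hfdef, h])
  have hIf'g : ∀ i : Fin d, Integrable fun x => fderiv ℝ (f i) x (eb i) * g x := fun i =>
    integrable_dom hφ.cmpt (((hfdc i).clm_apply continuous_const).mul
      (hφ.cont.inner hψ.cont)) (fun x h => by simp [hgdef, h])
  have hIffg : ∀ i : Fin d, Integrable fun x => f i x * g x := fun i =>
    integrable_dom hu.cmpt ((hu.cont.inner continuous_const).mul
      (hφ.cont.inner hψ.cont)) (fun x h => by simp [hfdef, h])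
  have hIφψ : Integrable fun x => (⟪fderiv ℝ φ x (u x), ψ x⟫ : ℝ) :=
    int_tri hu.cont hφ hψ.cont
  have hIψφ : Integrable fun x => (⟪fderiv ℝ ψ x (u x), φ x⟫ : ℝ) :=
    int_tri hu.cont hψ hφ.cont
  have key : triForm u φ ψ + triForm u ψ φ = ∑ i, ∫ x, f i x * fderiv ℝ g x (eb i) := by
    unfold triForm
    rw [← integral_add hIφψ hIψφ, ← integral_finset_sum _ (fun i _ => hIfg i)]
    congr 1
    funext x
    rw [← hdecomp x, hgder x (u x), real_inner_comm (fderiv ℝ ψ x (u x)) (φ x)]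
    ring
  have hibp : ∀ i : Fin d, (∫ x, f i x * fderiv ℝ g x (eb i))
      = - ∫ x, fderiv ℝ (f i) x (eb i) * g x := fun i =>
    integral_mul_fderiv_eq_neg_fderiv_mul_of_integrable (hIf'g i) (hIfg i) (hIffg i) (fun x _ => hfd i x) (fun x _ => hgd x)
  have hzero : ∑ i, ∫ x, fderiv ℝ (f i) x (eb i) * g x = 0 := by
    rw [← integral_finset_sum _ (fun i _ => hIf'g i)]
    have h : ∀ x : Euc d, (∑ i, fderiv ℝ (f i) x (eb i) * g x) = 0 := by
      intro x
      rw [← Finset.sum_mul]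
      have hdg : ∑ i, fderiv ℝ (f i) x (eb i) = divg u x := by
        unfold divg
        exact Finset.sum_congr rfl fun i _ => hfderiv i x (eb i)
      rw [hdg, hdiv x, zero_mul]
    simp_rw [h]
    exact integral_zero _ _
  have hfin : triForm u φ ψ + triForm u ψ φ = 0 := by
    rw [key]
    have : ∑ i, ∫ x, f i x * fderiv ℝ g x (eb i)
        = ∑ i : Fin d, -(∫ x, fderiv ℝ (f i) x (eb i) * g x) :=
      Finset.sum_congr rfl fun i _ => hibp i
    rw [this, Finset.sum_neg_distrib, hzero, neg_zero]
  linarith [hfin]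

lemma tri_self_zero {u φ : Euc d → Euc d} (hu : Reg u) (hφ : Reg φ)
    (hdiv : ∀ x, divg u x = 0) : triForm u φ φ = 0 := by
  have := tri_skew hu hφ hφ hdiv
  linarith

lemma l2inner_smul_sub (c : ℝ) {φ ψ χ : Euc d → Euc d} (hφ : Reg φ) (hψ : Reg ψ)
    (hχ : Continuous χ) :
    l2inner (fun x => c • (φ x - ψ x)) χ = c * (l2inner φ χ - l2inner ψ χ) := by
  unfold l2inner
  have h : ∀ x : Euc d, (⟪c • (φ x - ψ x), χ x⟫ : ℝ)
      = c * ((⟪φ x, χ x⟫ : ℝ) - ⟪ψ x, χ x⟫) := fun x => by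
    rw [real_inner_smul_left, inner_sub_left]
  simp_rw [h]
  rw [integral_const_mul, integral_sub (int_inner hφ hχ) (int_inner hψ hχ)]

/- lmax lemmas -/

lemma le_lmax {J : ℕ} (z : Fin J → ℕ → Euc d → Euc d) (k : Fin J) (n : ℕ) (x : Euc d) :
    ‖fluct J z k n x‖ ≤ lmax J z n x := by
  unfold lmax
  exact le_ciSup (f := fun k => ‖fluct J z k n x‖)
    (Set.Finite.bddAbove (Set.finite_range _)) k

lemma lmax_cont {J : ℕ} (hJ : J ≠ 0) {z : Fin J → ℕ → Euc d → Euc d} (n : ℕ)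
    (hz : ∀ k, Continuous (fluct J z k n)) : Continuous (lmax J z n) := by
  haveI : NeZero J := ⟨hJ⟩
  have h : lmax J z n = fun x =>
      Finset.univ.sup' Finset.univ_nonempty (fun k => ‖fluct J z k n x‖) := by
    funext x
    rw [Finset.sup'_univ_eq_ciSup]
    rfl
  rw [h]
  exact Continuous.finset_sup'_apply _ (fun k _ => (hz k).norm)

lemma int_lmax_frob {J : ℕ} (hJ : J ≠ 0) {z : Fin J → ℕ → Euc d → Euc d} {n : ℕ}
    (hz : ∀ k, Continuous (fluct J z k n)) {φ : Euc d → Euc d} (hφ : Reg φ) :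
    Integrable fun x => (lmax J z n x) ^ 2 * frobInner (fderiv ℝ φ x) (fderiv ℝ φ x) :=
  integrable_dom hφ.dcmpt (((lmax_cont hJ n hz).pow 2).mul (cont_frob hφ hφ))
    (fun x h => by simp [frobInner, h])


/-- The key Young-inequality estimate for the fluctuation trilinear term. -/
lemma tri_young {J : ℕ} (hJ : J ≠ 0) {z : Fin J → ℕ → Euc d → Euc d} {n : ℕ}
    (hz : ∀ k, Continuous (fluct J z k n)) (k : Fin J) {φ ζ : Euc d → Euc d}
    (hφ : Reg φ) (hζ : Reg ζ) (θ : ℝ) (hθ : 0 < θ) :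
    triForm (fluct J z k n) φ ζ
      ≤ θ * (∫ x, (lmax J z n x)^2 * frobInner (fderiv ℝ φ x) (fderiv ℝ φ x))
        + (1/(4*θ)) * l2inner ζ ζ := by
  have hpt : ∀ x : Euc d, (⟪fderiv ℝ φ x (fluct J z k n x), ζ x⟫ : ℝ)
      ≤ θ * ((lmax J z n x)^2 * frobInner (fderiv ℝ φ x) (fderiv ℝ φ x))
        + (1/(4*θ)) * ⟪ζ x, ζ x⟫ := by
    intro x
    set F := frobInner (fderiv ℝ φ x) (fderiv ℝ φ x) with hFdef
    have hF : 0 ≤ F := frobInner_self_nonneg _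
    have h1 : (⟪fderiv ℝ φ x (fluct J z k n x), ζ x⟫ : ℝ)
        ≤ ‖fderiv ℝ φ x (fluct J z k n x)‖ * ‖ζ x‖ := real_inner_le_norm _ _
    have h2 : ‖fderiv ℝ φ x (fluct J z k n x)‖
        ≤ Real.sqrt F * ‖fluct J z k n x‖ := frob_opnorm _ _
    have h3 := le_lmax z k n x
    have h2' : ‖fderiv ℝ φ x (fluct J z k n x)‖ * ‖ζ x‖
        ≤ (Real.sqrt F * lmax J z n x) * ‖ζ x‖ :=
      mul_le_mul_of_nonneg_right
        (h2.trans (mul_le_mul_of_nonneg_left h3 (Real.sqrt_nonneg _))) (norm_nonneg _)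
    have h4 := young_ineq (Real.sqrt F * lmax J z n x) ‖ζ x‖ θ hθ
    have h5 : (Real.sqrt F * lmax J z n x)^2 = (lmax J z n x)^2 * F := by
      rw [mul_pow, Real.sq_sqrt hF]; ring
    have h6 : (⟪ζ x, ζ x⟫ : ℝ) = ‖ζ x‖^2 := real_inner_self_eq_norm_sq _
    have h7 : ‖ζ x‖^2/(4*θ) = (1/(4*θ))*‖ζ x‖^2 := by ring
    have h8 : θ * (Real.sqrt F * lmax J z n x)^2 = θ * ((lmax J z n x)^2 * F) := by
      rw [h5]
    have h6' : 1/(4*θ) * (⟪ζ x, ζ x⟫ : ℝ) = 1/(4*θ) * ‖ζ x‖^2 := by rw [h6]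
    linarith [h1, h2', h4, h8, h6', h7]
  have hint1 : Integrable fun x => (⟪fderiv ℝ φ x (fluct J z k n x), ζ x⟫ : ℝ) :=
    int_tri (hz k) hφ hζ.cont
  have hintA : Integrable fun x =>
      θ * ((lmax J z n x)^2 * frobInner (fderiv ℝ φ x) (fderiv ℝ φ x)) :=
    (int_lmax_frob hJ hz hφ).const_mul θ
  have hintB : Integrable fun x => (1/(4*θ)) * (⟪ζ x, ζ x⟫ : ℝ) :=
    (int_inner hζ hζ.cont).const_mul _
  unfold triForm l2inner
  calc (∫ x, (⟪fderiv ℝ φ x (fluct J z k n x), ζ x⟫ : ℝ))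
      ≤ ∫ x, (θ * ((lmax J z n x)^2 * frobInner (fderiv ℝ φ x) (fderiv ℝ φ x))
          + (1/(4*θ)) * ⟪ζ x, ζ x⟫) := integral_mono hint1 (hintA.add hintB) hpt
    _ = θ * (∫ x, (lmax J z n x)^2 * frobInner (fderiv ℝ φ x) (fderiv ℝ φ x))
          + (1/(4*θ)) * ∫ x, (⟪ζ x, ζ x⟫ : ℝ) := by
        rw [integral_add hintA hintB, integral_const_mul, integral_const_mul]

end EDAux

set_option maxHeartbeats 1600000 in
/-- Energy dissipation of the scheme with zero forcing: the discrete energy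
`E_j^n := ‖v_j^n‖² + ‖w_j^n‖² + ((ν̄+ν̄_m)Δt/2)(‖∇v_j^n‖² + ‖∇w_j^n‖²)` is nonincreasing. -/
theorem energy_dissipation_zero_forcing
    (d : ℕ) (hd : d = 2 ∨ d = 3)
    (Ω : Set (Euc d)) (hΩo : IsOpen Ω) (hΩb : Bornology.IsBounded Ω)
    (Vh : Submodule ℝ (Euc d → Euc d)) (hVh : IsFEMSpace d Ω Vh)
    (J : ℕ) (hJ : 1 ≤ J)
    (ν νm : Fin J → ℝ) (hν : ∀ j, 0 < ν j) (hνm : ∀ j, 0 < νm j)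
    (Δt μ : ℝ) (M : ℕ) (v w f1 f2 : Fin J → ℕ → Euc d → Euc d)
    (hsol : SchemeSol d J Vh Δt μ ν νm M v w f1 f2)
    (j : Fin J) (hΔt : 0 < Δt) (hμ : 1/2 < μ) (hα : 0 < alphaCoef J ν νm j)
    (hf1 : ∀ n, f1 j (n+1) = 0) (hf2 : ∀ n, f2 j (n+1) = 0) :
    ∀ n < M,
      l2norm (v j (n+1)) ^ 2 + l2norm (w j (n+1)) ^ 2
        + ((mean J ν + mean J νm) * Δt / 2) *
            (gradNorm (v j (n+1)) ^ 2 + gradNorm (w j (n+1)) ^ 2)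
      ≤ l2norm (v j n) ^ 2 + l2norm (w j n) ^ 2
        + ((mean J ν + mean J νm) * Δt / 2) *
            (gradNorm (v j n) ^ 2 + gradNorm (w j n) ^ 2) := by
  intro n hn
  obtain ⟨hmem, hbdd, heq⟩ := hsol
  have hJ0 : J ≠ 0 := by omega
  have hreg : ∀ χ ∈ Vh, EDAux.Reg χ := fun χ h => ⟨(hVh.2 χ h).1, (hVh.2 χ h).2.1⟩
  have hdiv0 : ∀ χ ∈ Vh, ∀ x, divg χ x = 0 := fun χ h => (hVh.2 χ h).2.2.2
  -- memberships
  have hv0m : v j n ∈ Vh := (hmem j n (by omega)).1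
  have hw0m : w j n ∈ Vh := (hmem j n (by omega)).2
  have hVm : v j (n+1) ∈ Vh := (hmem j (n+1) (by omega)).1
  have hWm : w j (n+1) ∈ Vh := (hmem j (n+1) (by omega)).2
  have hensm : ∀ (z : Fin J → ℕ → Euc d → Euc d), (∀ k : Fin J, z k n ∈ Vh) →
      ensAvg J z n ∈ Vh := by
    intro z hz
    have hfun : ensAvg J z n = (J:ℝ)⁻¹ • (∑ k : Fin J, z k n) := by
      funext x; simp [ensAvg, Finset.sum_apply]
    rw [hfun]
    exact Submodule.smul_mem _ _ (Submodule.sum_mem _ fun k _ => hz k)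
  have hwENSm : ensAvg J w n ∈ Vh := hensm w (fun k => (hmem k n (by omega)).2)
  have hvENSm : ensAvg J v n ∈ Vh := hensm v (fun k => (hmem k n (by omega)).1)
  have hflwm : ∀ k : Fin J, fluct J w k n ∈ Vh := fun k =>
    Submodule.sub_mem _ (hmem k n (by omega)).2 hwENSm
  have hflvm : ∀ k : Fin J, fluct J v k n ∈ Vh := fun k =>
    Submodule.sub_mem _ (hmem k n (by omega)).1 hvENSm
  -- regularity
  have Rv0 : EDAux.Reg (v j n) := hreg _ hv0m
  have Rw0 : EDAux.Reg (w j n) := hreg _ hw0m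
  have RV : EDAux.Reg (v j (n+1)) := hreg _ hVm
  have RW : EDAux.Reg (w j (n+1)) := hreg _ hWm
  have Rensw : EDAux.Reg (ensAvg J w n) := hreg _ hwENSm
  have Rensv : EDAux.Reg (ensAvg J v n) := hreg _ hvENSm
  have Ruw : EDAux.Reg (fluct J w j n) := hreg _ (hflwm j)
  have Ruv : EDAux.Reg (fluct J v j n) := hreg _ (hflvm j)
  have hcflw : ∀ k, Continuous (fluct J w k n) := fun k => (hreg _ (hflwm k)).cont
  have hcflv : ∀ k, Continuous (fluct J v k n) := fun k => (hreg _ (hflvm k)).cont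
  have Rsub1 : EDAux.Reg (fun x => v j n x - v j (n+1) x) :=
    hreg _ (Submodule.sub_mem _ hv0m hVm)
  have Rsub2 : EDAux.Reg (fun x => w j n x - w j (n+1) x) :=
    hreg _ (Submodule.sub_mem _ hw0m hWm)
  -- the two tested scheme equations
  have eq1 := (heq n hn j (v j (n+1)) hVm).1
  have eq2 := (heq n hn j (w j (n+1)) hWm).2
  rw [hf1 n] at eq1
  rw [hf2 n] at eq2
  have hz1 : l2inner (0 : Euc d → Euc d) (v j (n+1)) = 0 := by simp [l2inner]
  have hz2 : l2inner (0 : Euc d → Euc d) (w j (n+1)) = 0 := by simp [l2inner]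
  rw [hz1] at eq1
  rw [hz2] at eq2
  rw [EDAux.l2inner_smul_sub Δt⁻¹ RV Rv0 RV.cont] at eq1
  rw [EDAux.l2inner_smul_sub Δt⁻¹ RW Rw0 RW.cont] at eq2
  rw [EDAux.tri_self_zero Rensw RV (hdiv0 _ hwENSm)] at eq1
  rw [EDAux.tri_self_zero Rensv RW (hdiv0 _ hvENSm)] at eq2
  -- rewrite the nonlinear fluctuation terms
  have hT1 : triForm (fluct J w j n) (v j n) (v j (n+1))
      = - triForm (fluct J w j n) (v j (n+1)) (fun x => v j n x - v j (n+1) x) := by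
    have hmid := EDAux.tri_middle_sub Ruw.cont Rv0 RV RV.cont
    have hself := EDAux.tri_self_zero Ruw RV (hdiv0 _ (hflwm j))
    have hskew := EDAux.tri_skew Ruw Rsub1 RV (hdiv0 _ (hflwm j))
    linarith [hmid, hself, hskew]
  have hT2 : triForm (fluct J v j n) (w j n) (w j (n+1))
      = - triForm (fluct J v j n) (w j (n+1)) (fun x => w j n x - w j (n+1) x) := by
    have hmid := EDAux.tri_middle_sub Ruv.cont Rw0 RW RW.cont
    have hself := EDAux.tri_self_zero Ruv RW (hdiv0 _ (hflvm j))
    have hskew := EDAux.tri_skew Ruv Rsub2 RW (hdiv0 _ (hflvm j))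
    linarith [hmid, hself, hskew]
  have hμΔ : (0:ℝ) < μ * Δt := mul_pos (by linarith) hΔt
  have hXle1 := EDAux.tri_young hJ0 hcflw j RV Rsub1 (μ*Δt) hμΔ
  have hXle2 := EDAux.tri_young hJ0 hcflv j RW Rsub2 (μ*Δt) hμΔ
  -- expansion of the increment norms
  have hQ1 : l2inner (fun x => v j n x - v j (n+1) x) (fun x => v j n x - v j (n+1) x)
      = l2inner (v j n) (v j n) - 2 * l2inner (v j n) (v j (n+1))
        + l2inner (v j (n+1)) (v j (n+1)) := EDAux.l2_expand_sub Rv0 RV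
  have hQ2 : l2inner (fun x => w j n x - w j (n+1) x) (fun x => w j n x - w j (n+1) x)
      = l2inner (w j n) (w j n) - 2 * l2inner (w j n) (w j (n+1))
        + l2inner (w j (n+1)) (w j (n+1)) := EDAux.l2_expand_sub Rw0 RW
  have hQ1' : Δt⁻¹ * l2inner (fun x => v j n x - v j (n+1) x)
        (fun x => v j n x - v j (n+1) x)
      = Δt⁻¹ * l2inner (v j n) (v j n) - 2 * (Δt⁻¹ * l2inner (v j n) (v j (n+1)))
        + Δt⁻¹ * l2inner (v j (n+1)) (v j (n+1)) := by rw [hQ1]; ring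
  have hQ2' : Δt⁻¹ * l2inner (fun x => w j n x - w j (n+1) x)
        (fun x => w j n x - w j (n+1) x)
      = Δt⁻¹ * l2inner (w j n) (w j n) - 2 * (Δt⁻¹ * l2inner (w j n) (w j (n+1)))
        + Δt⁻¹ * l2inner (w j (n+1)) (w j (n+1)) := by rw [hQ2]; ring
  have hS1nn : 0 ≤ l2inner (fun x => v j n x - v j (n+1) x)
      (fun x => v j n x - v j (n+1) x) := EDAux.l2inner_self_nonneg _
  have hS2nn : 0 ≤ l2inner (fun x => w j n x - w j (n+1) x)
      (fun x => w j n x - w j (n+1) x) := EDAux.l2inner_self_nonneg _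
  have hfrac : 1/(4*(μ*Δt)) ≤ Δt⁻¹/2 := by
    have hμ0 : (0:ℝ) < μ := by linarith
    have key : Δt⁻¹/2 - 1/(4*(μ*Δt)) = (2*μ - 1)/(4*(μ*Δt)) := by
      field_simp
      ring
    have h0 : 0 ≤ (2*μ - 1)/(4*(μ*Δt)) := div_nonneg (by linarith) (by positivity)
    linarith [key, h0]
  have h2a := mul_le_mul_of_nonneg_right hfrac hS1nn
  have h2b := mul_le_mul_of_nonneg_right hfrac hS2nn
  have hIμ1nn : 0 ≤ ∫ x, (lmax J w n x)^2 *
      frobInner (fderiv ℝ (v j (n+1)) x) (fderiv ℝ (v j (n+1)) x) :=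
    integral_nonneg fun x => mul_nonneg (sq_nonneg _) (EDAux.frobInner_self_nonneg _)
  have hIμ2nn : 0 ≤ ∫ x, (lmax J v n x)^2 *
      frobInner (fderiv ℝ (w j (n+1)) x) (fderiv ℝ (w j (n+1)) x) :=
    integral_nonneg fun x => mul_nonneg (sq_nonneg _) (EDAux.frobInner_self_nonneg _)
  have hIμ1nn' : 0 ≤ μ * Δt * ∫ x, (lmax J w n x)^2 *
      frobInner (fderiv ℝ (v j (n+1)) x) (fderiv ℝ (v j (n+1)) x) :=
    mul_nonneg hμΔ.le hIμ1nn
  have hIμ2nn' : 0 ≤ μ * Δt * ∫ x, (lmax J v n x)^2 *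
      frobInner (fderiv ℝ (w j (n+1)) x) (fderiv ℝ (w j (n+1)) x) :=
    mul_nonneg hμΔ.le hIμ2nn
  -- gradient cross-term bounds
  have habs1 := EDAux.gradInner_abs_le Rw0 RV
  have habs2 := EDAux.gradInner_abs_le Rv0 RV
  have habs3 := EDAux.gradInner_abs_le Rv0 RW
  have habs4 := EDAux.gradInner_abs_le Rw0 RW
  have hb1 : -(((ν j - νm j)/2) * gradInner (w j n) (v j (n+1)))
      ≤ |ν j - νm j|/2 * ((gradInner (w j n) (w j n)
          + gradInner (v j (n+1)) (v j (n+1)))/2) := by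
    calc -(((ν j - νm j)/2) * gradInner (w j n) (v j (n+1)))
        ≤ |((ν j - νm j)/2) * gradInner (w j n) (v j (n+1))| := neg_le_abs _
      _ = |(ν j - νm j)/2| * |gradInner (w j n) (v j (n+1))| := abs_mul _ _
      _ ≤ |(ν j - νm j)/2| * ((gradInner (w j n) (w j n)
            + gradInner (v j (n+1)) (v j (n+1)))/2) :=
          mul_le_mul_of_nonneg_left habs1 (abs_nonneg _)
      _ = |ν j - νm j|/2 * ((gradInner (w j n) (w j n)
            + gradInner (v j (n+1)) (v j (n+1)))/2) := by
          rw [abs_div]; norm_num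
  have hb2 : -((((ν j - mean J ν) + (νm j - mean J νm))/2) * gradInner (v j n) (v j (n+1)))
      ≤ |(ν j - mean J ν) + (νm j - mean J νm)|/2 * ((gradInner (v j n) (v j n)
          + gradInner (v j (n+1)) (v j (n+1)))/2) := by
    calc -((((ν j - mean J ν) + (νm j - mean J νm))/2) * gradInner (v j n) (v j (n+1)))
        ≤ |(((ν j - mean J ν) + (νm j - mean J νm))/2) * gradInner (v j n) (v j (n+1))| :=
          neg_le_abs _
      _ = |((ν j - mean J ν) + (νm j - mean J νm))/2| * |gradInner (v j n) (v j (n+1))| :=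
          abs_mul _ _
      _ ≤ |((ν j - mean J ν) + (νm j - mean J νm))/2| * ((gradInner (v j n) (v j n)
            + gradInner (v j (n+1)) (v j (n+1)))/2) :=
          mul_le_mul_of_nonneg_left habs2 (abs_nonneg _)
      _ = |(ν j - mean J ν) + (νm j - mean J νm)|/2 * ((gradInner (v j n) (v j n)
            + gradInner (v j (n+1)) (v j (n+1)))/2) := by
          rw [abs_div]; norm_num
  have hb3 : -(((ν j - νm j)/2) * gradInner (v j n) (w j (n+1)))
      ≤ |ν j - νm j|/2 * ((gradInner (v j n) (v j n)
          + gradInner (w j (n+1)) (w j (n+1)))/2) := by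
    calc -(((ν j - νm j)/2) * gradInner (v j n) (w j (n+1)))
        ≤ |((ν j - νm j)/2) * gradInner (v j n) (w j (n+1))| := neg_le_abs _
      _ = |(ν j - νm j)/2| * |gradInner (v j n) (w j (n+1))| := abs_mul _ _
      _ ≤ |(ν j - νm j)/2| * ((gradInner (v j n) (v j n)
            + gradInner (w j (n+1)) (w j (n+1)))/2) :=
          mul_le_mul_of_nonneg_left habs3 (abs_nonneg _)
      _ = |ν j - νm j|/2 * ((gradInner (v j n) (v j n)
            + gradInner (w j (n+1)) (w j (n+1)))/2) := by
          rw [abs_div]; norm_num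
  have hb4 : -((((ν j - mean J ν) + (νm j - mean J νm))/2) * gradInner (w j n) (w j (n+1)))
      ≤ |(ν j - mean J ν) + (νm j - mean J νm)|/2 * ((gradInner (w j n) (w j n)
          + gradInner (w j (n+1)) (w j (n+1)))/2) := by
    calc -((((ν j - mean J ν) + (νm j - mean J νm))/2) * gradInner (w j n) (w j (n+1)))
        ≤ |(((ν j - mean J ν) + (νm j - mean J νm))/2) * gradInner (w j n) (w j (n+1))| :=
          neg_le_abs _
      _ = |((ν j - mean J ν) + (νm j - mean J νm))/2| * |gradInner (w j n) (w j (n+1))| :=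
          abs_mul _ _
      _ ≤ |((ν j - mean J ν) + (νm j - mean J νm))/2| * ((gradInner (w j n) (w j n)
            + gradInner (w j (n+1)) (w j (n+1)))/2) :=
          mul_le_mul_of_nonneg_left habs4 (abs_nonneg _)
      _ = |(ν j - mean J ν) + (νm j - mean J νm)|/2 * ((gradInner (w j n) (w j n)
            + gradInner (w j (n+1)) (w j (n+1)))/2) := by
          rw [abs_div]; norm_num
  -- the per-equation estimates
  have P1 : Δt⁻¹ * l2inner (v j (n+1)) (v j (n+1)) - Δt⁻¹ * l2inner (v j n) (v j n)
      + (mean J ν + mean J νm) * gradInner (v j (n+1)) (v j (n+1))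
      ≤ |ν j - νm j|/2 * (gradInner (w j n) (w j n) + gradInner (v j (n+1)) (v j (n+1)))
        + |(ν j - mean J ν) + (νm j - mean J νm)|/2 * (gradInner (v j n) (v j n)
          + gradInner (v j (n+1)) (v j (n+1))) := by
    linarith [eq1, hT1, hXle1, hQ1', h2a, hIμ1nn', hb1, hb2]
  have P2 : Δt⁻¹ * l2inner (w j (n+1)) (w j (n+1)) - Δt⁻¹ * l2inner (w j n) (w j n)
      + (mean J ν + mean J νm) * gradInner (w j (n+1)) (w j (n+1))
      ≤ |ν j - νm j|/2 * (gradInner (v j n) (v j n) + gradInner (w j (n+1)) (w j (n+1)))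
        + |(ν j - mean J ν) + (νm j - mean J νm)|/2 * (gradInner (w j n) (w j n)
          + gradInner (w j (n+1)) (w j (n+1))) := by
    linarith [eq2, hT2, hXle2, hQ2', h2b, hIμ2nn', hb3, hb4]
  -- multiply through by Δt
  have hinv : Δt * Δt⁻¹ = 1 := mul_inv_cancel₀ hΔt.ne'
  have P1m := mul_le_mul_of_nonneg_left P1 hΔt.le
  have P2m := mul_le_mul_of_nonneg_left P2 hΔt.le
  rw [show Δt * (Δt⁻¹ * l2inner (v j (n+1)) (v j (n+1))
        - Δt⁻¹ * l2inner (v j n) (v j n)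
        + (mean J ν + mean J νm) * gradInner (v j (n+1)) (v j (n+1)))
      = Δt * Δt⁻¹ * l2inner (v j (n+1)) (v j (n+1))
        - Δt * Δt⁻¹ * l2inner (v j n) (v j n)
        + Δt * ((mean J ν + mean J νm) * gradInner (v j (n+1)) (v j (n+1))) from by ring,
    hinv, one_mul, one_mul] at P1m
  rw [show Δt * (Δt⁻¹ * l2inner (w j (n+1)) (w j (n+1))
        - Δt⁻¹ * l2inner (w j n) (w j n)
        + (mean J ν + mean J νm) * gradInner (w j (n+1)) (w j (n+1)))
      = Δt * Δt⁻¹ * l2inner (w j (n+1)) (w j (n+1))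
        - Δt * Δt⁻¹ * l2inner (w j n) (w j n)
        + Δt * ((mean J ν + mean J νm) * gradInner (w j (n+1)) (w j (n+1))) from by ring,
    hinv, one_mul, one_mul] at P2m
  -- final combination
  have hα' : 0 < (mean J ν + mean J νm) - |ν j - νm j|
      - |(ν j - mean J ν) + (νm j - mean J νm)| := hα
  have hpos : 0 ≤ Δt * ((mean J ν + mean J νm) - |ν j - νm j|
        - |(ν j - mean J ν) + (νm j - mean J νm)|)
      * (gradInner (v j n) (v j n) + gradInner (w j n) (w j n)
        + gradInner (v j (n+1)) (v j (n+1)) + gradInner (w j (n+1)) (w j (n+1))) :=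
    mul_nonneg (mul_nonneg hΔt.le hα'.le)
      (by linarith [EDAux.gradInner_self_nonneg (v j n), EDAux.gradInner_self_nonneg (w j n),
        EDAux.gradInner_self_nonneg (v j (n+1)), EDAux.gradInner_self_nonneg (w j (n+1))])
  simp only [EDAux.l2norm_sq, EDAux.gradNorm_sq]
  linarith [P1m, P2m, hpos]
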